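/- Let n ≥ 1 and let a, b : Fin n → ℝ be monotone nondecreasing functions. Then min over all permutations σ of Fin n of max_{i} |a(i) − b(σ(i))| equals max_{i} |a(i) − b(i)|; that is, the optimal matching distance between two lists of real numbers is attained by pairing them in increasing order. -/

import Mathlib

lemma optimal_matching_aux (n : ℕ) (a b : Fin n → ℝ) (ha : Monotone a) (hb : Monotone b)
    (σ : Equiv.Perm (Fin n)) (i : Fin n) :
    ∃ j, |a i - b i| ≤ |a j - b (σ j)| := by
  rcases le_total (b i) (a i) with h | h
  · have hne : ((Finset.Ici i) ∩ (Finset.univ.filter fun j => σ j ≤ i)).Nonempty := by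
      rw [← Finset.card_pos]
      have h1 : (Finset.Ici i).card = n - i.val := Fin.card_Ici i
      have h2 : (Finset.univ.filter fun j => σ j ≤ i).card = i.val + 1 := by
        have he : (Finset.univ.filter fun j => σ j ≤ i)
            = (Finset.Iic i).map σ.symm.toEmbedding := by
          ext j
          simp [Finset.mem_map, Equiv.symm_apply_eq, eq_comm]
        rw [he, Finset.card_map, Fin.card_Iic]
      have h3 := Finset.card_inter_add_card_union (Finset.Ici i)
        (Finset.univ.filter fun j => σ j ≤ i)
      have h4 : ((Finset.Ici i) ∪ (Finset.univ.filter fun j => σ j ≤ i)).card ≤ n := by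
        exact le_trans (Finset.card_le_univ _) (by simp)
      have h5 : i.val < n := i.isLt
      omega
    obtain ⟨j, hj⟩ := hne
    simp only [Finset.mem_inter, Finset.mem_Ici, Finset.mem_filter] at hj
    refine ⟨j, ?_⟩
    have h1 : a i ≤ a j := ha hj.1
    have h2 : b (σ j) ≤ b i := hb hj.2.2
    have : a i - b i ≤ a j - b (σ j) := by linarith
    rw [abs_of_nonneg (by linarith)]
    exact this.trans (le_abs_self _)
  · have hne : ((Finset.Iic i) ∩ (Finset.univ.filter fun j => i ≤ σ j)).Nonempty := by
      rw [← Finset.card_pos]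
      have h1 : (Finset.Iic i).card = i.val + 1 := Fin.card_Iic i
      have h2 : (Finset.univ.filter fun j => i ≤ σ j).card = n - i.val := by
        have he : (Finset.univ.filter fun j => i ≤ σ j)
            = (Finset.Ici i).map σ.symm.toEmbedding := by
          ext j
          simp [Finset.mem_map, Equiv.symm_apply_eq, eq_comm]
        rw [he, Finset.card_map, Fin.card_Ici]
      have h3 := Finset.card_inter_add_card_union (Finset.Iic i)
        (Finset.univ.filter fun j => i ≤ σ j)
      have h4 : ((Finset.Iic i) ∪ (Finset.univ.filter fun j => i ≤ σ j)).card ≤ n := by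
        exact le_trans (Finset.card_le_univ _) (by simp)
      have h5 : i.val < n := i.isLt
      omega
    obtain ⟨j, hj⟩ := hne
    simp only [Finset.mem_inter, Finset.mem_Iic, Finset.mem_filter] at hj
    refine ⟨j, ?_⟩
    have h1 : a j ≤ a i := ha hj.1
    have h2 : b i ≤ b (σ j) := hb hj.2.2
    have : b i - a i ≤ b (σ j) - a j := by linarith
    rw [abs_of_nonpos (by linarith), neg_sub, abs_sub_comm]
    exact this.trans (le_abs_self _)

/-- The optimal matching distance between two nondecreasing lists of real numbers is
attained by pairing them in increasing order. -/
theorem optimal_matching_of_monotone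
    (n : ℕ) (hn : 1 ≤ n) (a b : Fin n → ℝ) (ha : Monotone a) (hb : Monotone b) :
    (⨅ σ : Equiv.Perm (Fin n), ⨆ i : Fin n, |a i - b (σ i)|)
      = ⨆ i : Fin n, |a i - b i| := by
  have hne : Nonempty (Fin n) := ⟨⟨0, hn⟩⟩
  apply le_antisymm
  · exact (ciInf_le (f := fun σ : Equiv.Perm (Fin n) => ⨆ i, |a i - b (σ i)|) (Set.Finite.bddBelow (Set.finite_range _)) (1 : Equiv.Perm (Fin n))).trans (le_of_eq rfl)
  · refine le_ciInf fun σ => ?_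
    refine ciSup_le fun i => ?_
    obtain ⟨j, hj⟩ := optimal_matching_aux n a b ha hb σ i
    exact hj.trans (le_ciSup (f := fun j => |a j - b (σ j)|) (Set.Finite.bddAbove (Set.finite_range _)) j)
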